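/- Let T : X₁×⋯×Xₙ → Y be a bounded multilinear operator between Banach spaces, with linearization T̃ : X₁⊗_π⋯⊗_π Xₙ → Y and associated Σ-operator f_T = T̃|_{Σ_{X₁,…,Xₙ}}. Then for any reasonable crossnorm β on X₁⊗⋯⊗Xₙ, ‖T‖ = Lip^π(f_T) ≤ Lip^β(f_T) ≤ 2^{n−1} Lip^π(f_T), where Lip^β denotes the Lipschitz constant of f_T with respect to the metric induced by β on the Segre cone. -/

import Mathlib

/- Common framework: Σ-operators, reasonable crossnorms, Σ-ideals and Σ-tensor norms,
following S. García-Hernández, "The duality between ideals of multilinear operators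
and tensor norms". -/

open scoped TensorProduct
open PiTensorProduct

universe u

noncomputable section

/-- The Segre cone: the set of decomposable (elementary) tensors in `⨂ᵢ Xᵢ`. -/
def Segre (𝕜 : Type u) [RCLike 𝕜] {ι : Type} [Fintype ι] (X : ι → Type u)
    [∀ i, NormedAddCommGroup (X i)] [∀ i, NormedSpace 𝕜 (X i)] :
    Set (⨂[𝕜] i, X i) :=
  {u | ∃ x : (i : ι) → X i, u = ⨂ₜ[𝕜] i, x i}



/-- The set of values `|x₁*⊗⋯⊗xₙ*(u)|` over functionals `xᵢ* ∈ B_{Xᵢ*}`. -/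
def epsSet {𝕜 : Type u} [RCLike 𝕜] {ι : Type} [Fintype ι] {X : ι → Type u}
    [∀ i, NormedAddCommGroup (X i)] [∀ i, NormedSpace 𝕜 (X i)]
    (u : ⨂[𝕜] i, X i) : Set ℝ :=
  {r | ∃ f : ∀ i, X i →L[𝕜] 𝕜, (∀ i, ‖f i‖ ≤ 1) ∧
    r = ‖PiTensorProduct.lift
      ((ContinuousMultilinearMap.mkPiAlgebra 𝕜 ι 𝕜).compContinuousLinearMap
        f).toMultilinearMap u‖}

/-- The classical injective tensor norm
`ε(u) = sup { |x₁*⊗⋯⊗xₙ*(u)| : xᵢ* ∈ B_{Xᵢ*} }`. -/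
def epsSeminorm (𝕜 : Type u) [RCLike 𝕜] {ι : Type} [Fintype ι] (X : ι → Type u)
    [∀ i, NormedAddCommGroup (X i)] [∀ i, NormedSpace 𝕜 (X i)] :
    (⨂[𝕜] i, X i) → ℝ := fun u => sSup (epsSet u)

section EpsLemmas

variable {𝕜 : Type u} [RCLike 𝕜] {ι : Type} [Fintype ι] [Nonempty ι] {X : ι → Type u}
    [∀ i, NormedAddCommGroup (X i)] [∀ i, NormedSpace 𝕜 (X i)]

theorem epsSet_le (u : ⨂[𝕜] i, X i) : ∀ r ∈ epsSet u, r ≤ projectiveSeminorm u := by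
  rintro r ⟨f, hf, rfl⟩
  refine ((norm_eval_le_projectiveSeminorm _ u).trans (le_of_eq (mul_comm _ _))).trans ?_
  calc projectiveSeminorm u *
        ‖(ContinuousMultilinearMap.mkPiAlgebra 𝕜 ι 𝕜).compContinuousLinearMap f‖
      ≤ projectiveSeminorm u * 1 := by
        refine mul_le_mul_of_nonneg_left ?_ (apply_nonneg _ u)
        refine (ContinuousMultilinearMap.norm_compContinuousLinearMap_le _ _).trans ?_
        exact mul_le_one₀ ContinuousMultilinearMap.norm_mkPiAlgebra_le
          (Finset.prod_nonneg fun i _ => norm_nonneg _)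
          (Finset.prod_le_one (fun i _ => norm_nonneg _) (fun i _ => hf i))
    _ = projectiveSeminorm u := mul_one _

theorem epsSet_bdd (u : ⨂[𝕜] i, X i) : BddAbove (epsSet u) :=
  ⟨projectiveSeminorm u, fun r hr => epsSet_le u r hr⟩

theorem epsSeminorm_nonneg (u : ⨂[𝕜] i, X i) : 0 ≤ epsSeminorm 𝕜 X u :=
  Real.sSup_nonneg (by rintro r ⟨f, hf, rfl⟩; exact norm_nonneg _)

theorem epsSeminorm_le_projectiveSeminorm (u : ⨂[𝕜] i, X i) :
    epsSeminorm 𝕜 X u ≤ projectiveSeminorm u :=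
  Real.sSup_le (epsSet_le u) (apply_nonneg projectiveSeminorm u)

theorem epsSeminorm_add_le (u v : ⨂[𝕜] i, X i) :
    epsSeminorm 𝕜 X (u + v) ≤ epsSeminorm 𝕜 X u + epsSeminorm 𝕜 X v := by
  refine Real.sSup_le ?_ (add_nonneg (epsSeminorm_nonneg u) (epsSeminorm_nonneg v))
  rintro r ⟨f, hf, rfl⟩
  rw [map_add]
  refine (norm_add_le _ _).trans (add_le_add ?_ ?_)
  · exact le_csSup (epsSet_bdd u) ⟨f, hf, rfl⟩
  · exact le_csSup (epsSet_bdd v) ⟨f, hf, rfl⟩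

theorem epsSeminorm_smul_le (c : 𝕜) (u : ⨂[𝕜] i, X i) :
    epsSeminorm 𝕜 X (c • u) ≤ ‖c‖ * epsSeminorm 𝕜 X u := by
  refine Real.sSup_le ?_ (mul_nonneg (norm_nonneg c) (epsSeminorm_nonneg u))
  rintro r ⟨f, hf, rfl⟩
  rw [map_smul, norm_smul]
  exact mul_le_mul_of_nonneg_left (le_csSup (epsSet_bdd u) ⟨f, hf, rfl⟩) (norm_nonneg c)

theorem epsSeminorm_smul (c : 𝕜) (u : ⨂[𝕜] i, X i) :
    epsSeminorm 𝕜 X (c • u) = ‖c‖ * epsSeminorm 𝕜 X u := by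
  rcases eq_or_ne c 0 with rfl | hc
  · rw [norm_zero, zero_mul, zero_smul]
    refine le_antisymm (Real.sSup_le ?_ le_rfl) (epsSeminorm_nonneg 0)
    rintro r ⟨f, hf, rfl⟩
    simp
  · refine le_antisymm (epsSeminorm_smul_le c u) ?_
    have h := epsSeminorm_smul_le c⁻¹ (c • u)
    rw [inv_smul_smul₀ hc, norm_inv] at h
    calc ‖c‖ * epsSeminorm 𝕜 X u
        ≤ ‖c‖ * (‖c‖⁻¹ * epsSeminorm 𝕜 X (c • u)) :=
          mul_le_mul_of_nonneg_left h (norm_nonneg c)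
      _ = epsSeminorm 𝕜 X (c • u) := by
          rw [← mul_assoc, mul_inv_cancel₀ (norm_ne_zero_iff.mpr hc), one_mul]

end EpsLemmas


theorem projectiveSeminorm_map_le {𝕜 : Type u} [RCLike 𝕜] {ι : Type} [Fintype ι]
    {E F : ι → Type u} [∀ i, NormedAddCommGroup (E i)] [∀ i, NormedSpace 𝕜 (E i)]
    [∀ i, NormedAddCommGroup (F i)] [∀ i, NormedSpace 𝕜 (F i)]
    (g : ∀ i, E i →ₗ[𝕜] F i) (hg : ∀ i x, ‖g i x‖ ≤ ‖x‖) (u : ⨂[𝕜] i, E i) :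
    projectiveSeminorm (PiTensorProduct.map g u) ≤ projectiveSeminorm u := by
  rw [projectiveSeminorm_apply, projectiveSeminorm_apply]
  letI := nonempty_subtype.mpr (nonempty_lifts u)
  refine le_ciInf fun p => ?_
  have hmem : (List.map (fun y : 𝕜 × (∀ i, E i) => (y.1, fun i => g i (y.2 i))) (FreeAddMonoid.toList p.1) :
      FreeAddMonoid (𝕜 × ∀ i, F i)) ∈ lifts (PiTensorProduct.map g u) := by
    refine (mem_lifts_iff _ _).mpr ?_
    have hp := (mem_lifts_iff u p.1).mp p.2
    calc (List.map (fun x : 𝕜 × (∀ i, F i) => x.1 • ⨂ₜ[𝕜] i, x.2 i)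
          (List.map (fun y : 𝕜 × (∀ i, E i) => (y.1, fun i => g i (y.2 i))) (FreeAddMonoid.toList p.1))).sum
        = (List.map ((PiTensorProduct.map g) ∘ (fun x : 𝕜 × (∀ i, E i) =>
            x.1 • ⨂ₜ[𝕜] i, x.2 i)) (FreeAddMonoid.toList p.1)).sum := by
          rw [List.map_map]
          congr 1
          refine List.map_congr_left fun y _ => ?_
          simp [PiTensorProduct.map_tprod]
      _ = PiTensorProduct.map g u := by
          rw [← List.map_map, ← map_list_sum, hp]
  refine ciInf_le_of_le (bddBelow_projectiveSemiNormAux _) ⟨_, hmem⟩ ?_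
  simp only [projectiveSeminormAux]
  erw [List.map_map]
  refine List.sum_le_sum fun y _ => ?_
  simp only [Function.comp_apply]
  refine mul_le_mul_of_nonneg_left ?_ (norm_nonneg _)
  exact Finset.prod_le_prod (fun i _ => norm_nonneg _) (fun i _ => hg i _)

/-- A reasonable crossnorm on `⨂ᵢ Xᵢ`: a seminorm-like functional lying between the
injective and projective tensor seminorms. -/
structure ReasonableCrossnorm (𝕜 : Type u) [RCLike 𝕜] {ι : Type} [Fintype ι] [Nonempty ι]
    (X : ι → Type u) [∀ i, NormedAddCommGroup (X i)] [∀ i, NormedSpace 𝕜 (X i)] :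
    Type u where
  toFun : (⨂[𝕜] i, X i) → ℝ
  add_le' : ∀ u v, toFun (u + v) ≤ toFun u + toFun v
  smul' : ∀ (c : 𝕜) (u), toFun (c • u) = ‖c‖ * toFun u
  le_proj' : ∀ u, toFun u ≤ projectiveSeminorm u
  inj_le' : ∀ u, epsSeminorm 𝕜 X u ≤ toFun u

section Basic

variable {𝕜 : Type u} [RCLike 𝕜] {ι : Type} [Fintype ι] [Nonempty ι] {X : ι → Type u}
    [∀ i, NormedAddCommGroup (X i)] [∀ i, NormedSpace 𝕜 (X i)]
    {Y : Type u} [NormedAddCommGroup Y] [NormedSpace 𝕜 Y]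

/-- The projective tensor norm `π` as a reasonable crossnorm. -/
def ReasonableCrossnorm.proj : ReasonableCrossnorm 𝕜 X where
  toFun := projectiveSeminorm
  add_le' := fun u v => map_add_le_add _ u v
  smul' := fun c u => map_smul_eq_mul _ c u
  le_proj' := fun _ => le_rfl
  inj_le' := fun u => epsSeminorm_le_projectiveSeminorm u

/-- The injective tensor norm `ε` as a reasonable crossnorm. -/
def ReasonableCrossnorm.inj : ReasonableCrossnorm 𝕜 X where
  toFun := epsSeminorm 𝕜 X
  add_le' := fun u v => epsSeminorm_add_le u v
  smul' := fun c u => epsSeminorm_smul c u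
  le_proj' := fun u => epsSeminorm_le_projectiveSeminorm u
  inj_le' := fun _ => le_rfl

/-- `𝓛^β(X₁,…,Xₙ)`: the space of linear functionals on `⨂ᵢ Xᵢ` that are bounded
with respect to `β` (equivalently, multilinear forms whose `β`-linearization is
bounded). -/
def BetaDual (β : ReasonableCrossnorm 𝕜 X) : Submodule 𝕜 ((⨂[𝕜] i, X i) →ₗ[𝕜] 𝕜) where
  carrier := {f | ∃ C, 0 ≤ C ∧ ∀ u, ‖f u‖ ≤ C * β.toFun u}
  add_mem' := by
    rintro f g ⟨C, hC, hf⟩ ⟨D, hD, hg⟩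
    exact ⟨C + D, add_nonneg hC hD, fun u => by
      simpa [add_mul] using (norm_add_le (f u) (g u)).trans (add_le_add (hf u) (hg u))⟩
  zero_mem' := ⟨0, le_rfl, fun u => by simp⟩
  smul_mem' := by
    rintro c f ⟨C, hC, hf⟩
    exact ⟨‖c‖ * C, mul_nonneg (norm_nonneg c) hC, fun u => by
      simpa [norm_smul, mul_assoc] using mul_le_mul_of_nonneg_left (hf u) (norm_nonneg c)⟩

/-- The dual norm `‖·‖_β` of a `β`-bounded functional (multilinear form). -/
def betaDualNorm (β : ReasonableCrossnorm 𝕜 X) (f : (⨂[𝕜] i, X i) →ₗ[𝕜] 𝕜) : ℝ :=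
  sInf {C | 0 ≤ C ∧ ∀ u, ‖f u‖ ≤ C * β.toFun u}

/-- Evaluation of continuous functionals at a point, as a linear map into the
algebraic dual of the topological dual. -/
def evalCLM (𝕜 : Type u) [RCLike 𝕜] (M : Type u) [NormedAddCommGroup M]
    [NormedSpace 𝕜 M] : M →ₗ[𝕜] ((M →L[𝕜] 𝕜) →ₗ[𝕜] 𝕜) where
  toFun y :=
    { toFun := fun g => g y
      map_add' := fun g h => rfl
      map_smul' := fun c g => rfl }
  map_add' y z := by ext g; simp
  map_smul' c y := by ext g; simp

/-- Evaluation of `β`-bounded forms at a tensor. -/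
def evalBeta (β : ReasonableCrossnorm 𝕜 X) :
    (⨂[𝕜] i, X i) →ₗ[𝕜] ((BetaDual β) →ₗ[𝕜] 𝕜) where
  toFun u :=
    { toFun := fun f => f.1 u
      map_add' := fun f g => rfl
      map_smul' := fun c f => rfl }
  map_add' u v := by ext f; exact f.1.map_add u v
  map_smul' c u := by ext f; exact f.1.map_smul c u

/-- Evaluation pairing: an element of `𝓛^β(X₁,…,Xₙ) ⊗ Y` acts as a functional on
`X₁⊗⋯⊗Xₙ⊗Y*` by `⟨φ⊗y , u⊗y*⟩ = φ(u)·y*(y)`. -/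
def evalLD (β : ReasonableCrossnorm 𝕜 X) :
    ((BetaDual β) ⊗[𝕜] Y) →ₗ[𝕜] (((⨂[𝕜] i, X i) ⊗[𝕜] (Y →L[𝕜] 𝕜)) →ₗ[𝕜] 𝕜) :=
  (TensorProduct.dualDistrib 𝕜 (⨂[𝕜] i, X i) (Y →L[𝕜] 𝕜)).comp
    (TensorProduct.map (BetaDual β).subtype (evalCLM 𝕜 Y))

/-- Converse pairing: an element of `X₁⊗⋯⊗Xₙ⊗Y` acts as a functional on
`𝓛^β(X₁,…,Xₙ) ⊗ Y*` by `⟨u⊗y , φ⊗y*⟩ = φ(u)·y*(y)`. -/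
def pairSF (β : ReasonableCrossnorm 𝕜 X) :
    ((⨂[𝕜] i, X i) ⊗[𝕜] Y) →ₗ[𝕜] (((BetaDual β) ⊗[𝕜] (Y →L[𝕜] 𝕜)) →ₗ[𝕜] 𝕜) :=
  (TensorProduct.dualDistrib 𝕜 (BetaDual β) (Y →L[𝕜] 𝕜)).comp
    (TensorProduct.map (evalBeta β) (evalCLM 𝕜 Y))

/-- The functional `φ ⊗ y*` on `X₁⊗⋯⊗Xₙ⊗Y`. -/
def funcSY (φ : (⨂[𝕜] i, X i) →ₗ[𝕜] 𝕜) (g : Y →L[𝕜] 𝕜) :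
    ((⨂[𝕜] i, X i) ⊗[𝕜] Y) →ₗ[𝕜] 𝕜 :=
  TensorProduct.dualDistrib 𝕜 (⨂[𝕜] i, X i) Y (φ ⊗ₜ[𝕜] (g : Y →ₗ[𝕜] 𝕜))

/-- The rank one multilinear operator `φ · y : (x¹,…,xⁿ) ↦ φ(x¹,…,xⁿ)·y`. -/
def rankOne (φ : MultilinearMap 𝕜 X 𝕜) (y : Y) : MultilinearMap 𝕜 X Y :=
  (LinearMap.toSpanSingleton 𝕜 Y y).compMultilinearMap φ

/-- The multilinear operator associated to a linear map on the tensor product. -/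
def toMulti (L : (⨂[𝕜] i, X i) →ₗ[𝕜] Y) : MultilinearMap 𝕜 X Y :=
  L.compMultilinearMap (PiTensorProduct.tprod 𝕜)

/-- The finite rank operator (as a linear map on the tensor product) associated to
`v ∈ 𝓛^β(X₁,…,Xₙ) ⊗ Y` via `φ ⊗ y ↦ φ(·)y`. -/
def toOp (β : ReasonableCrossnorm 𝕜 X) :
    ((BetaDual β) ⊗[𝕜] Y) →ₗ[𝕜] ((⨂[𝕜] i, X i) →ₗ[𝕜] Y) :=
  TensorProduct.lift ((LinearMap.smulRightₗ).comp (BetaDual β).subtype)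

/-- The restriction `β|` of a reasonable crossnorm to subspaces `Eᵢ ⊂ Xᵢ`
(Remark 2.1 of the paper: it is again a reasonable crossnorm). -/
def ReasonableCrossnorm.restrict (β : ReasonableCrossnorm 𝕜 X)
    (E : ∀ i, Submodule 𝕜 (X i)) :
    ReasonableCrossnorm 𝕜 (fun i => (E i : Type u)) where
  toFun u := β.toFun (PiTensorProduct.map (fun i => (E i).subtype) u)
  add_le' u v := by simp only [map_add]; exact β.add_le' _ _
  smul' c u := by simp only [map_smul]; exact β.smul' _ _
  le_proj' u :=
    (β.le_proj' _).trans
      (projectiveSeminorm_map_le _ (fun i x => le_of_eq rfl) u)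
  inj_le' u := by
    refine Real.sSup_le ?_ (le_trans (epsSeminorm_nonneg _) (β.inj_le' _))
    rintro r ⟨f, hf, rfl⟩
    choose g hgx hgn using fun i => exists_extension_norm_eq (E i) (f i)
    have key : PiTensorProduct.lift
        ((ContinuousMultilinearMap.mkPiAlgebra 𝕜 ι 𝕜).compContinuousLinearMap
          f).toMultilinearMap u =
        PiTensorProduct.lift
          ((ContinuousMultilinearMap.mkPiAlgebra 𝕜 ι 𝕜).compContinuousLinearMap
            g).toMultilinearMap
          (PiTensorProduct.map (fun i => (E i).subtype) u) := by
      rw [← LinearMap.comp_apply, PiTensorProduct.lift_comp_map]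
      congr 1
      ext m
      simp only [LinearMap.compMultilinearMap_apply, PiTensorProduct.lift.tprod,
        ContinuousMultilinearMap.coe_coe, MultilinearMap.compLinearMap_apply,
        ContinuousMultilinearMap.compContinuousLinearMap_apply,
        ContinuousMultilinearMap.mkPiAlgebra_apply]
      exact Finset.prod_congr rfl fun i _ => (hgx i (m i)).symm
    rw [key]
    refine le_trans (le_csSup (epsSet_bdd _) ⟨g, fun i => (hgn i).le.trans (hf i), rfl⟩)
      (β.inj_le' _)

/-- Restriction of `β`-bounded forms to subspaces. -/
def restrictDual (β : ReasonableCrossnorm 𝕜 X) (E : ∀ i, Submodule 𝕜 (X i)) :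
    (BetaDual β) →ₗ[𝕜] (BetaDual (β.restrict E)) where
  toFun f := ⟨f.1 ∘ₗ PiTensorProduct.map (fun i => (E i).subtype),
    by obtain ⟨C, hC, hb⟩ := f.2; exact ⟨C, hC, fun u => hb _⟩⟩
  map_add' f g := by ext u; rfl
  map_smul' c f := by ext u; rfl

/-- The operator `Q_L ∘ f_T ∘ I_{E₁,…,Eₙ}` between finite dimensional spaces. -/
def smallOp {L : Submodule 𝕜 Y} (hL : IsClosed (L : Set Y))
    (T : MultilinearMap 𝕜 X Y) (E : ∀ i, Submodule 𝕜 (X i)) :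
    MultilinearMap 𝕜 (fun i => (E i : Type u)) (Y ⧸ L) :=
  toMulti (L.mkQ ∘ₗ PiTensorProduct.lift T ∘ₗ PiTensorProduct.map (fun i => (E i).subtype))

end Basic
section Norms

variable {𝕜 : Type u} [RCLike 𝕜] {ι : Type} [Fintype ι] [Nonempty ι] {X : ι → Type u}
    [∀ i, NormedAddCommGroup (X i)] [∀ i, NormedSpace 𝕜 (X i)]
    {Y : Type u} [NormedAddCommGroup Y] [NormedSpace 𝕜 Y]

/-- The Lipschitz constant `Lip^β(f)` of (the restriction to the Segre cone of) a linear
map on the tensor product, with respect to the metric induced by `β`. -/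
def lipschitzNormOn (β : ReasonableCrossnorm 𝕜 X) (f : (⨂[𝕜] i, X i) →ₗ[𝕜] Y) : ℝ :=
  sInf {C | 0 ≤ C ∧ ∀ p ∈ Segre 𝕜 X, ∀ q ∈ Segre 𝕜 X,
    ‖f p - f q‖ ≤ C * β.toFun (p - q)}

/-- The greatest Σ-tensor norm on spaces, `π^β`. -/
def piBetaS (β : ReasonableCrossnorm 𝕜 X) (u : (⨂[𝕜] i, X i) ⊗[𝕜] Y) : ℝ :=
  sInf {r | ∃ (m : ℕ) (p q : Fin m → ⨂[𝕜] i, X i) (y : Fin m → Y),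
    (∀ k, p k ∈ Segre 𝕜 X ∧ q k ∈ Segre 𝕜 X) ∧
    u = ∑ k, (p k - q k) ⊗ₜ[𝕜] y k ∧ r = ∑ k, β.toFun (p k - q k) * ‖y k‖}

/-- The least Σ-tensor norm on spaces, `ε^β`. -/
def epsBetaS (β : ReasonableCrossnorm 𝕜 X) (u : (⨂[𝕜] i, X i) ⊗[𝕜] Y) : ℝ :=
  sSup {r | ∃ (φ : (⨂[𝕜] i, X i) →ₗ[𝕜] 𝕜) (g : Y →L[𝕜] 𝕜),
    (∀ w, ‖φ w‖ ≤ β.toFun w) ∧ ‖g‖ ≤ 1 ∧ r = ‖funcSY φ g u‖}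

/-- The greatest Σ-tensor norm on duals, `π_β`. -/
def piBetaD (β : ReasonableCrossnorm 𝕜 X) (v : (BetaDual β) ⊗[𝕜] Y) : ℝ :=
  sInf {r | ∃ (m : ℕ) (f : Fin m → BetaDual β) (y : Fin m → Y) (C : Fin m → ℝ),
    (∀ k, 0 ≤ C k ∧ ∀ u, ‖(f k).1 u‖ ≤ C k * β.toFun u) ∧
    v = ∑ k, (f k) ⊗ₜ[𝕜] (y k) ∧ r = ∑ k, C k * ‖y k‖}

/-- The least Σ-tensor norm on duals, `ε_β`. -/
def epsBetaD (β : ReasonableCrossnorm 𝕜 X) (v : (BetaDual β) ⊗[𝕜] Y) : ℝ :=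
  sSup {r | ∃ p ∈ Segre 𝕜 X, ∃ q ∈ Segre 𝕜 X, ∃ g : Y →L[𝕜] 𝕜,
    β.toFun (p - q) ≤ 1 ∧ ‖g‖ ≤ 1 ∧ r = ‖evalLD β v ((p - q) ⊗ₜ[𝕜] g)‖}

end Norms
section Structures

variable (𝕜 : Type u) [RCLike 𝕜]

/-- A Σ-ideal of multilinear operators on the class of normed (Banach) spaces
(Definition 3.1): an assignment, to each election `(n, X₁,…,Xₙ, Y, β)`, of a class of
multilinear operators together with an ideal norm, satisfying I1, I2, I3. -/
structure SigmaIdeal where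
  Mem : ∀ {ι : Type} [Fintype ι] [Nonempty ι] {X : ι → Type u}
    [∀ i, NormedAddCommGroup (X i)] [∀ i, NormedSpace 𝕜 (X i)]
    {Y : Type u} [NormedAddCommGroup Y] [NormedSpace 𝕜 Y],
    ReasonableCrossnorm 𝕜 X → MultilinearMap 𝕜 X Y → Prop
  anorm : ∀ {ι : Type} [Fintype ι] [Nonempty ι] {X : ι → Type u}
    [∀ i, NormedAddCommGroup (X i)] [∀ i, NormedSpace 𝕜 (X i)]
    {Y : Type u} [NormedAddCommGroup Y] [NormedSpace 𝕜 Y],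
    ReasonableCrossnorm 𝕜 X → MultilinearMap 𝕜 X Y → ℝ
  /-- I1: rank one operators belong to the components. -/
  I1 : ∀ {ι : Type} [Fintype ι] [Nonempty ι] {X : ι → Type u}
    [∀ i, NormedAddCommGroup (X i)] [∀ i, NormedSpace 𝕜 (X i)]
    {Y : Type u} [NormedAddCommGroup Y] [NormedSpace 𝕜 Y]
    (β : ReasonableCrossnorm 𝕜 X) (φ : MultilinearMap 𝕜 X 𝕜) (C : ℝ), 0 ≤ C →
    (∀ u, ‖PiTensorProduct.lift φ u‖ ≤ C * β.toFun u) → ∀ y : Y,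
    Mem β (rankOne φ y) ∧ anorm β (rankOne φ y) ≤ C * ‖y‖
  /-- I2: `Lip^β(f_T) ≤ A^β(T)`. -/
  I2 : ∀ {ι : Type} [Fintype ι] [Nonempty ι] {X : ι → Type u}
    [∀ i, NormedAddCommGroup (X i)] [∀ i, NormedSpace 𝕜 (X i)]
    {Y : Type u} [NormedAddCommGroup Y] [NormedSpace 𝕜 Y]
    (β : ReasonableCrossnorm 𝕜 X) (T : MultilinearMap 𝕜 X Y), Mem β T →
    ∀ p ∈ Segre 𝕜 X, ∀ q ∈ Segre 𝕜 X,
      ‖PiTensorProduct.lift T p - PiTensorProduct.lift T q‖ ≤ anorm β T * β.toFun (p - q)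
  /-- I3: the Σ-ideal property. -/
  I3 : ∀ {ι κ : Type} [Fintype ι] [Nonempty ι] [Fintype κ] [Nonempty κ]
    {X : ι → Type u} [∀ i, NormedAddCommGroup (X i)] [∀ i, NormedSpace 𝕜 (X i)]
    {Z : κ → Type u} [∀ j, NormedAddCommGroup (Z j)] [∀ j, NormedSpace 𝕜 (Z j)]
    {Y W : Type u} [NormedAddCommGroup Y] [NormedSpace 𝕜 Y]
    [NormedAddCommGroup W] [NormedSpace 𝕜 W]
    (β : ReasonableCrossnorm 𝕜 X) (θ : ReasonableCrossnorm 𝕜 Z)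
    (R : (⨂[𝕜] j, Z j) →ₗ[𝕜] (⨂[𝕜] i, X i)) (CR : ℝ), 0 ≤ CR →
    (∀ v, β.toFun (R v) ≤ CR * θ.toFun v) →
    (∀ p ∈ Segre 𝕜 Z, R p ∈ Segre 𝕜 X) →
    ∀ (T : MultilinearMap 𝕜 X Y), Mem β T → ∀ (S : Y →L[𝕜] W),
    Mem θ (toMulti (S.toLinearMap ∘ₗ PiTensorProduct.lift T ∘ₗ R)) ∧
      anorm θ (toMulti (S.toLinearMap ∘ₗ PiTensorProduct.lift T ∘ₗ R)) ≤
        CR * anorm β T * ‖S‖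

/-- A Σ-tensor norm on spaces (Definition 4.1): an assignment, to each election, of a
norm on `X₁⊗⋯⊗Xₙ⊗Y` satisfying S1, S2 and the uniform property S3. -/
structure SigmaTensorNormOnSpaces where
  tn : ∀ {ι : Type} [Fintype ι] [Nonempty ι] {X : ι → Type u}
    [∀ i, NormedAddCommGroup (X i)] [∀ i, NormedSpace 𝕜 (X i)]
    {Y : Type u} [NormedAddCommGroup Y] [NormedSpace 𝕜 Y],
    ReasonableCrossnorm 𝕜 X → ((⨂[𝕜] i, X i) ⊗[𝕜] Y) → ℝ
  tn_add_le : ∀ {ι : Type} [Fintype ι] [Nonempty ι] {X : ι → Type u}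
    [∀ i, NormedAddCommGroup (X i)] [∀ i, NormedSpace 𝕜 (X i)]
    {Y : Type u} [NormedAddCommGroup Y] [NormedSpace 𝕜 Y]
    (β : ReasonableCrossnorm 𝕜 X) (u v : (⨂[𝕜] i, X i) ⊗[𝕜] Y),
    tn β (u + v) ≤ tn β u + tn β v
  tn_smul : ∀ {ι : Type} [Fintype ι] [Nonempty ι] {X : ι → Type u}
    [∀ i, NormedAddCommGroup (X i)] [∀ i, NormedSpace 𝕜 (X i)]
    {Y : Type u} [NormedAddCommGroup Y] [NormedSpace 𝕜 Y]
    (β : ReasonableCrossnorm 𝕜 X) (c : 𝕜) (u : (⨂[𝕜] i, X i) ⊗[𝕜] Y),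
    tn β (c • u) = ‖c‖ * tn β u
  /-- S1. -/
  S1 : ∀ {ι : Type} [Fintype ι] [Nonempty ι] {X : ι → Type u}
    [∀ i, NormedAddCommGroup (X i)] [∀ i, NormedSpace 𝕜 (X i)]
    {Y : Type u} [NormedAddCommGroup Y] [NormedSpace 𝕜 Y]
    (β : ReasonableCrossnorm 𝕜 X), ∀ p ∈ Segre 𝕜 X, ∀ q ∈ Segre 𝕜 X, ∀ y : Y,
    tn β ((p - q) ⊗ₜ[𝕜] y) ≤ β.toFun (p - q) * ‖y‖
  /-- S2. -/
  S2 : ∀ {ι : Type} [Fintype ι] [Nonempty ι] {X : ι → Type u}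
    [∀ i, NormedAddCommGroup (X i)] [∀ i, NormedSpace 𝕜 (X i)]
    {Y : Type u} [NormedAddCommGroup Y] [NormedSpace 𝕜 Y]
    (β : ReasonableCrossnorm 𝕜 X) (φ : (⨂[𝕜] i, X i) →ₗ[𝕜] 𝕜) (C : ℝ), 0 ≤ C →
    (∀ w, ‖φ w‖ ≤ C * β.toFun w) → ∀ (g : Y →L[𝕜] 𝕜) (u : (⨂[𝕜] i, X i) ⊗[𝕜] Y),
    ‖funcSY φ g u‖ ≤ C * ‖g‖ * tn β u
  /-- S3: the uniform property. -/
  S3 : ∀ {ι κ : Type} [Fintype ι] [Nonempty ι] [Fintype κ] [Nonempty κ]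
    {X : ι → Type u} [∀ i, NormedAddCommGroup (X i)] [∀ i, NormedSpace 𝕜 (X i)]
    {Z : κ → Type u} [∀ j, NormedAddCommGroup (Z j)] [∀ j, NormedSpace 𝕜 (Z j)]
    {Y W : Type u} [NormedAddCommGroup Y] [NormedSpace 𝕜 Y]
    [NormedAddCommGroup W] [NormedSpace 𝕜 W]
    (β : ReasonableCrossnorm 𝕜 X) (θ : ReasonableCrossnorm 𝕜 Z)
    (R : (⨂[𝕜] j, Z j) →ₗ[𝕜] (⨂[𝕜] i, X i)) (CR : ℝ), 0 ≤ CR →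
    (∀ v, β.toFun (R v) ≤ CR * θ.toFun v) →
    (∀ p ∈ Segre 𝕜 Z, R p ∈ Segre 𝕜 X) →
    ∀ (S : W →L[𝕜] Y) (u : (⨂[𝕜] j, Z j) ⊗[𝕜] W),
    tn β (TensorProduct.map R S.toLinearMap u) ≤ CR * ‖S‖ * tn θ u

/-- A Σ-tensor norm on duals (Definition 4.2): an assignment, to each election, of a
norm on `𝓛^β(X₁,…,Xₙ) ⊗ Y` satisfying D1, D2 and the uniform property D3 with respect
to Σ-preserving operators. -/
structure SigmaTensorNormOnDuals where
  tn : ∀ {ι : Type} [Fintype ι] [Nonempty ι] {X : ι → Type u}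
    [∀ i, NormedAddCommGroup (X i)] [∀ i, NormedSpace 𝕜 (X i)]
    {Y : Type u} [NormedAddCommGroup Y] [NormedSpace 𝕜 Y]
    (β : ReasonableCrossnorm 𝕜 X), ((BetaDual β) ⊗[𝕜] Y) → ℝ
  tn_add_le : ∀ {ι : Type} [Fintype ι] [Nonempty ι] {X : ι → Type u}
    [∀ i, NormedAddCommGroup (X i)] [∀ i, NormedSpace 𝕜 (X i)]
    {Y : Type u} [NormedAddCommGroup Y] [NormedSpace 𝕜 Y]
    (β : ReasonableCrossnorm 𝕜 X) (v w : (BetaDual β) ⊗[𝕜] Y),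
    tn β (v + w) ≤ tn β v + tn β w
  tn_smul : ∀ {ι : Type} [Fintype ι] [Nonempty ι] {X : ι → Type u}
    [∀ i, NormedAddCommGroup (X i)] [∀ i, NormedSpace 𝕜 (X i)]
    {Y : Type u} [NormedAddCommGroup Y] [NormedSpace 𝕜 Y]
    (β : ReasonableCrossnorm 𝕜 X) (c : 𝕜) (v : (BetaDual β) ⊗[𝕜] Y),
    tn β (c • v) = ‖c‖ * tn β v
  /-- D1. -/
  D1 : ∀ {ι : Type} [Fintype ι] [Nonempty ι] {X : ι → Type u}
    [∀ i, NormedAddCommGroup (X i)] [∀ i, NormedSpace 𝕜 (X i)]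
    {Y : Type u} [NormedAddCommGroup Y] [NormedSpace 𝕜 Y]
    (β : ReasonableCrossnorm 𝕜 X) (f : BetaDual β) (C : ℝ), 0 ≤ C →
    (∀ u, ‖f.1 u‖ ≤ C * β.toFun u) → ∀ y : Y, tn β (f ⊗ₜ[𝕜] y) ≤ C * ‖y‖
  /-- D2. -/
  D2 : ∀ {ι : Type} [Fintype ι] [Nonempty ι] {X : ι → Type u}
    [∀ i, NormedAddCommGroup (X i)] [∀ i, NormedSpace 𝕜 (X i)]
    {Y : Type u} [NormedAddCommGroup Y] [NormedSpace 𝕜 Y]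
    (β : ReasonableCrossnorm 𝕜 X), ∀ p ∈ Segre 𝕜 X, ∀ q ∈ Segre 𝕜 X,
    ∀ (g : Y →L[𝕜] 𝕜) (v : (BetaDual β) ⊗[𝕜] Y),
    ‖evalLD β v ((p - q) ⊗ₜ[𝕜] g)‖ ≤ β.toFun (p - q) * ‖g‖ * tn β v
  /-- D3: the uniform property with respect to Σ-preserving operators. -/
  D3 : ∀ {ι κ : Type} [Fintype ι] [Nonempty ι] [Fintype κ] [Nonempty κ]
    {X : ι → Type u} [∀ i, NormedAddCommGroup (X i)] [∀ i, NormedSpace 𝕜 (X i)]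
    {Z : κ → Type u} [∀ j, NormedAddCommGroup (Z j)] [∀ j, NormedSpace 𝕜 (Z j)]
    {Y W : Type u} [NormedAddCommGroup Y] [NormedSpace 𝕜 Y]
    [NormedAddCommGroup W] [NormedSpace 𝕜 W]
    (β : ReasonableCrossnorm 𝕜 X) (θ : ReasonableCrossnorm 𝕜 Z)
    (A : (BetaDual β) →ₗ[𝕜] (BetaDual θ)) (CA : ℝ), 0 ≤ CA →
    (∀ (f : BetaDual β) (C : ℝ), 0 ≤ C → (∀ u, ‖f.1 u‖ ≤ C * β.toFun u) →
      ∀ w, ‖(A f).1 w‖ ≤ CA * C * θ.toFun w) →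
    (∀ q ∈ Segre 𝕜 Z, ∃ p ∈ Segre 𝕜 X, ∀ f : BetaDual β, (A f).1 q = f.1 p) →
    ∀ (B : Y →L[𝕜] W) (v : (BetaDual β) ⊗[𝕜] Y),
    tn θ (TensorProduct.map A B.toLinearMap v) ≤ CA * ‖B‖ * tn β v

end Structures
section StructuresFin

variable (𝕜 : Type u) [RCLike 𝕜]

/-- A Σ-ideal of multilinear operators on the class of finite dimensional normed spaces
(Definition 3.1): an assignment, to each election `(n, X₁,…,Xₙ, Y, β)`, of a class of
multilinear operators together with an ideal norm, satisfying I1, I2, I3. -/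
structure SigmaIdealFin where
  Mem : ∀ {ι : Type} [Fintype ι] [Nonempty ι] {X : ι → Type u}
    [∀ i, NormedAddCommGroup (X i)] [∀ i, NormedSpace 𝕜 (X i)] [∀ i, FiniteDimensional 𝕜 (X i)]
    {Y : Type u} [NormedAddCommGroup Y] [NormedSpace 𝕜 Y] [FiniteDimensional 𝕜 Y],
    ReasonableCrossnorm 𝕜 X → MultilinearMap 𝕜 X Y → Prop
  anorm : ∀ {ι : Type} [Fintype ι] [Nonempty ι] {X : ι → Type u}
    [∀ i, NormedAddCommGroup (X i)] [∀ i, NormedSpace 𝕜 (X i)] [∀ i, FiniteDimensional 𝕜 (X i)]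
    {Y : Type u} [NormedAddCommGroup Y] [NormedSpace 𝕜 Y] [FiniteDimensional 𝕜 Y],
    ReasonableCrossnorm 𝕜 X → MultilinearMap 𝕜 X Y → ℝ
  /-- I1: rank one operators belong to the components. -/
  I1 : ∀ {ι : Type} [Fintype ι] [Nonempty ι] {X : ι → Type u}
    [∀ i, NormedAddCommGroup (X i)] [∀ i, NormedSpace 𝕜 (X i)] [∀ i, FiniteDimensional 𝕜 (X i)]
    {Y : Type u} [NormedAddCommGroup Y] [NormedSpace 𝕜 Y] [FiniteDimensional 𝕜 Y]
    (β : ReasonableCrossnorm 𝕜 X) (φ : MultilinearMap 𝕜 X 𝕜) (C : ℝ), 0 ≤ C →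
    (∀ u, ‖PiTensorProduct.lift φ u‖ ≤ C * β.toFun u) → ∀ y : Y,
    Mem β (rankOne φ y) ∧ anorm β (rankOne φ y) ≤ C * ‖y‖
  /-- I2: `Lip^β(f_T) ≤ A^β(T)`. -/
  I2 : ∀ {ι : Type} [Fintype ι] [Nonempty ι] {X : ι → Type u}
    [∀ i, NormedAddCommGroup (X i)] [∀ i, NormedSpace 𝕜 (X i)] [∀ i, FiniteDimensional 𝕜 (X i)]
    {Y : Type u} [NormedAddCommGroup Y] [NormedSpace 𝕜 Y] [FiniteDimensional 𝕜 Y]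
    (β : ReasonableCrossnorm 𝕜 X) (T : MultilinearMap 𝕜 X Y), Mem β T →
    ∀ p ∈ Segre 𝕜 X, ∀ q ∈ Segre 𝕜 X,
      ‖PiTensorProduct.lift T p - PiTensorProduct.lift T q‖ ≤ anorm β T * β.toFun (p - q)
  /-- I3: the Σ-ideal property. -/
  I3 : ∀ {ι κ : Type} [Fintype ι] [Nonempty ι] [Fintype κ] [Nonempty κ]
    {X : ι → Type u} [∀ i, NormedAddCommGroup (X i)] [∀ i, NormedSpace 𝕜 (X i)] [∀ i, FiniteDimensional 𝕜 (X i)]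
    {Z : κ → Type u} [∀ j, NormedAddCommGroup (Z j)] [∀ j, NormedSpace 𝕜 (Z j)] [∀ j, FiniteDimensional 𝕜 (Z j)]
    {Y W : Type u} [NormedAddCommGroup Y] [NormedSpace 𝕜 Y] [FiniteDimensional 𝕜 Y]
    [NormedAddCommGroup W] [NormedSpace 𝕜 W] [FiniteDimensional 𝕜 W]
    (β : ReasonableCrossnorm 𝕜 X) (θ : ReasonableCrossnorm 𝕜 Z)
    (R : (⨂[𝕜] j, Z j) →ₗ[𝕜] (⨂[𝕜] i, X i)) (CR : ℝ), 0 ≤ CR →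
    (∀ v, β.toFun (R v) ≤ CR * θ.toFun v) →
    (∀ p ∈ Segre 𝕜 Z, R p ∈ Segre 𝕜 X) →
    ∀ (T : MultilinearMap 𝕜 X Y), Mem β T → ∀ (S : Y →L[𝕜] W),
    Mem θ (toMulti (S.toLinearMap ∘ₗ PiTensorProduct.lift T ∘ₗ R)) ∧
      anorm θ (toMulti (S.toLinearMap ∘ₗ PiTensorProduct.lift T ∘ₗ R)) ≤
        CR * anorm β T * ‖S‖

/-- A Σ-tensor norm on spaces (Definition 4.1): an assignment, to each election, of a
norm on `X₁⊗⋯⊗Xₙ⊗Y` satisfying S1, S2 and the uniform property S3. -/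
structure SigmaTensorNormOnSpacesFin where
  tn : ∀ {ι : Type} [Fintype ι] [Nonempty ι] {X : ι → Type u}
    [∀ i, NormedAddCommGroup (X i)] [∀ i, NormedSpace 𝕜 (X i)] [∀ i, FiniteDimensional 𝕜 (X i)]
    {Y : Type u} [NormedAddCommGroup Y] [NormedSpace 𝕜 Y] [FiniteDimensional 𝕜 Y],
    ReasonableCrossnorm 𝕜 X → ((⨂[𝕜] i, X i) ⊗[𝕜] Y) → ℝ
  tn_add_le : ∀ {ι : Type} [Fintype ι] [Nonempty ι] {X : ι → Type u}
    [∀ i, NormedAddCommGroup (X i)] [∀ i, NormedSpace 𝕜 (X i)] [∀ i, FiniteDimensional 𝕜 (X i)]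
    {Y : Type u} [NormedAddCommGroup Y] [NormedSpace 𝕜 Y] [FiniteDimensional 𝕜 Y]
    (β : ReasonableCrossnorm 𝕜 X) (u v : (⨂[𝕜] i, X i) ⊗[𝕜] Y),
    tn β (u + v) ≤ tn β u + tn β v
  tn_smul : ∀ {ι : Type} [Fintype ι] [Nonempty ι] {X : ι → Type u}
    [∀ i, NormedAddCommGroup (X i)] [∀ i, NormedSpace 𝕜 (X i)] [∀ i, FiniteDimensional 𝕜 (X i)]
    {Y : Type u} [NormedAddCommGroup Y] [NormedSpace 𝕜 Y] [FiniteDimensional 𝕜 Y]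
    (β : ReasonableCrossnorm 𝕜 X) (c : 𝕜) (u : (⨂[𝕜] i, X i) ⊗[𝕜] Y),
    tn β (c • u) = ‖c‖ * tn β u
  /-- S1. -/
  S1 : ∀ {ι : Type} [Fintype ι] [Nonempty ι] {X : ι → Type u}
    [∀ i, NormedAddCommGroup (X i)] [∀ i, NormedSpace 𝕜 (X i)] [∀ i, FiniteDimensional 𝕜 (X i)]
    {Y : Type u} [NormedAddCommGroup Y] [NormedSpace 𝕜 Y] [FiniteDimensional 𝕜 Y]
    (β : ReasonableCrossnorm 𝕜 X), ∀ p ∈ Segre 𝕜 X, ∀ q ∈ Segre 𝕜 X, ∀ y : Y,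
    tn β ((p - q) ⊗ₜ[𝕜] y) ≤ β.toFun (p - q) * ‖y‖
  /-- S2. -/
  S2 : ∀ {ι : Type} [Fintype ι] [Nonempty ι] {X : ι → Type u}
    [∀ i, NormedAddCommGroup (X i)] [∀ i, NormedSpace 𝕜 (X i)] [∀ i, FiniteDimensional 𝕜 (X i)]
    {Y : Type u} [NormedAddCommGroup Y] [NormedSpace 𝕜 Y] [FiniteDimensional 𝕜 Y]
    (β : ReasonableCrossnorm 𝕜 X) (φ : (⨂[𝕜] i, X i) →ₗ[𝕜] 𝕜) (C : ℝ), 0 ≤ C →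
    (∀ w, ‖φ w‖ ≤ C * β.toFun w) → ∀ (g : Y →L[𝕜] 𝕜) (u : (⨂[𝕜] i, X i) ⊗[𝕜] Y),
    ‖funcSY φ g u‖ ≤ C * ‖g‖ * tn β u
  /-- S3: the uniform property. -/
  S3 : ∀ {ι κ : Type} [Fintype ι] [Nonempty ι] [Fintype κ] [Nonempty κ]
    {X : ι → Type u} [∀ i, NormedAddCommGroup (X i)] [∀ i, NormedSpace 𝕜 (X i)] [∀ i, FiniteDimensional 𝕜 (X i)]
    {Z : κ → Type u} [∀ j, NormedAddCommGroup (Z j)] [∀ j, NormedSpace 𝕜 (Z j)] [∀ j, FiniteDimensional 𝕜 (Z j)]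
    {Y W : Type u} [NormedAddCommGroup Y] [NormedSpace 𝕜 Y] [FiniteDimensional 𝕜 Y]
    [NormedAddCommGroup W] [NormedSpace 𝕜 W] [FiniteDimensional 𝕜 W]
    (β : ReasonableCrossnorm 𝕜 X) (θ : ReasonableCrossnorm 𝕜 Z)
    (R : (⨂[𝕜] j, Z j) →ₗ[𝕜] (⨂[𝕜] i, X i)) (CR : ℝ), 0 ≤ CR →
    (∀ v, β.toFun (R v) ≤ CR * θ.toFun v) →
    (∀ p ∈ Segre 𝕜 Z, R p ∈ Segre 𝕜 X) →
    ∀ (S : W →L[𝕜] Y) (u : (⨂[𝕜] j, Z j) ⊗[𝕜] W),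
    tn β (TensorProduct.map R S.toLinearMap u) ≤ CR * ‖S‖ * tn θ u

/-- A Σ-tensor norm on duals (Definition 4.2): an assignment, to each election, of a
norm on `𝓛^β(X₁,…,Xₙ) ⊗ Y` satisfying D1, D2 and the uniform property D3 with respect
to Σ-preserving operators. -/
structure SigmaTensorNormOnDualsFin where
  tn : ∀ {ι : Type} [Fintype ι] [Nonempty ι] {X : ι → Type u}
    [∀ i, NormedAddCommGroup (X i)] [∀ i, NormedSpace 𝕜 (X i)] [∀ i, FiniteDimensional 𝕜 (X i)]
    {Y : Type u} [NormedAddCommGroup Y] [NormedSpace 𝕜 Y] [FiniteDimensional 𝕜 Y]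
    (β : ReasonableCrossnorm 𝕜 X), ((BetaDual β) ⊗[𝕜] Y) → ℝ
  tn_add_le : ∀ {ι : Type} [Fintype ι] [Nonempty ι] {X : ι → Type u}
    [∀ i, NormedAddCommGroup (X i)] [∀ i, NormedSpace 𝕜 (X i)] [∀ i, FiniteDimensional 𝕜 (X i)]
    {Y : Type u} [NormedAddCommGroup Y] [NormedSpace 𝕜 Y] [FiniteDimensional 𝕜 Y]
    (β : ReasonableCrossnorm 𝕜 X) (v w : (BetaDual β) ⊗[𝕜] Y),
    tn β (v + w) ≤ tn β v + tn β w
  tn_smul : ∀ {ι : Type} [Fintype ι] [Nonempty ι] {X : ι → Type u}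
    [∀ i, NormedAddCommGroup (X i)] [∀ i, NormedSpace 𝕜 (X i)] [∀ i, FiniteDimensional 𝕜 (X i)]
    {Y : Type u} [NormedAddCommGroup Y] [NormedSpace 𝕜 Y] [FiniteDimensional 𝕜 Y]
    (β : ReasonableCrossnorm 𝕜 X) (c : 𝕜) (v : (BetaDual β) ⊗[𝕜] Y),
    tn β (c • v) = ‖c‖ * tn β v
  /-- D1. -/
  D1 : ∀ {ι : Type} [Fintype ι] [Nonempty ι] {X : ι → Type u}
    [∀ i, NormedAddCommGroup (X i)] [∀ i, NormedSpace 𝕜 (X i)] [∀ i, FiniteDimensional 𝕜 (X i)]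
    {Y : Type u} [NormedAddCommGroup Y] [NormedSpace 𝕜 Y] [FiniteDimensional 𝕜 Y]
    (β : ReasonableCrossnorm 𝕜 X) (f : BetaDual β) (C : ℝ), 0 ≤ C →
    (∀ u, ‖f.1 u‖ ≤ C * β.toFun u) → ∀ y : Y, tn β (f ⊗ₜ[𝕜] y) ≤ C * ‖y‖
  /-- D2. -/
  D2 : ∀ {ι : Type} [Fintype ι] [Nonempty ι] {X : ι → Type u}
    [∀ i, NormedAddCommGroup (X i)] [∀ i, NormedSpace 𝕜 (X i)] [∀ i, FiniteDimensional 𝕜 (X i)]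
    {Y : Type u} [NormedAddCommGroup Y] [NormedSpace 𝕜 Y] [FiniteDimensional 𝕜 Y]
    (β : ReasonableCrossnorm 𝕜 X), ∀ p ∈ Segre 𝕜 X, ∀ q ∈ Segre 𝕜 X,
    ∀ (g : Y →L[𝕜] 𝕜) (v : (BetaDual β) ⊗[𝕜] Y),
    ‖evalLD β v ((p - q) ⊗ₜ[𝕜] g)‖ ≤ β.toFun (p - q) * ‖g‖ * tn β v
  /-- D3: the uniform property with respect to Σ-preserving operators. -/
  D3 : ∀ {ι κ : Type} [Fintype ι] [Nonempty ι] [Fintype κ] [Nonempty κ]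
    {X : ι → Type u} [∀ i, NormedAddCommGroup (X i)] [∀ i, NormedSpace 𝕜 (X i)] [∀ i, FiniteDimensional 𝕜 (X i)]
    {Z : κ → Type u} [∀ j, NormedAddCommGroup (Z j)] [∀ j, NormedSpace 𝕜 (Z j)] [∀ j, FiniteDimensional 𝕜 (Z j)]
    {Y W : Type u} [NormedAddCommGroup Y] [NormedSpace 𝕜 Y] [FiniteDimensional 𝕜 Y]
    [NormedAddCommGroup W] [NormedSpace 𝕜 W] [FiniteDimensional 𝕜 W]
    (β : ReasonableCrossnorm 𝕜 X) (θ : ReasonableCrossnorm 𝕜 Z)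
    (A : (BetaDual β) →ₗ[𝕜] (BetaDual θ)) (CA : ℝ), 0 ≤ CA →
    (∀ (f : BetaDual β) (C : ℝ), 0 ≤ C → (∀ u, ‖f.1 u‖ ≤ C * β.toFun u) →
      ∀ w, ‖(A f).1 w‖ ≤ CA * C * θ.toFun w) →
    (∀ q ∈ Segre 𝕜 Z, ∃ p ∈ Segre 𝕜 X, ∀ f : BetaDual β, (A f).1 q = f.1 p) →
    ∀ (B : Y →L[𝕜] W) (v : (BetaDual β) ⊗[𝕜] Y),
    tn θ (TensorProduct.map A B.toLinearMap v) ≤ CA * ‖B‖ * tn β v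

end StructuresFin
section Predicates

variable {𝕜 : Type u} [RCLike 𝕜]

/-- Maximality of a Σ-ideal (Definition 3.2):
`A^β(T) = sup A^{β|}(Q_L f_T I_{E₁,…,Eₙ})` over finite dimensional subspaces
`Eᵢ ⊂ Xᵢ` and finite codimensional closed subspaces `L ⊂ Y`. -/
def SigmaIdeal.IsMaximal (I : SigmaIdeal 𝕜) : Prop :=
  ∀ {ι : Type} [Fintype ι] [Nonempty ι] {X : ι → Type u}
    [∀ i, NormedAddCommGroup (X i)] [∀ i, NormedSpace 𝕜 (X i)]
    [∀ i, CompleteSpace (X i)]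
    {Y : Type u} [NormedAddCommGroup Y] [NormedSpace 𝕜 Y] [CompleteSpace Y]
    (β : ReasonableCrossnorm 𝕜 X) (T : MultilinearMap 𝕜 X Y), I.Mem β T →
    I.anorm β T = sSup {r | ∃ (E : ∀ i, Submodule 𝕜 (X i))
      (_ : ∀ i, FiniteDimensional 𝕜 (E i)) (L : Submodule 𝕜 Y)
      (hL : IsClosed (L : Set Y)) (_ : FiniteDimensional 𝕜 (Y ⧸ L)),
      I.Mem (β.restrict E) (smallOp hL T E) ∧
        r = I.anorm (β.restrict E) (smallOp hL T E)}

/-- A Σ-tensor norm on spaces is finitely generated (Definition 4.3):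
`α^β(u; X, Y) = inf α^{β|}(u; E, F)` over finite dimensional subspaces containing `u`. -/
def SigmaTensorNormOnSpaces.IsFinitelyGenerated (α : SigmaTensorNormOnSpaces 𝕜) : Prop :=
  ∀ {ι : Type} [Fintype ι] [Nonempty ι] {X : ι → Type u}
    [∀ i, NormedAddCommGroup (X i)] [∀ i, NormedSpace 𝕜 (X i)]
    {Y : Type u} [NormedAddCommGroup Y] [NormedSpace 𝕜 Y]
    (β : ReasonableCrossnorm 𝕜 X) (u : (⨂[𝕜] i, X i) ⊗[𝕜] Y),
    α.tn β u = sInf {r | ∃ (E : ∀ i, Submodule 𝕜 (X i))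
      (_ : ∀ i, FiniteDimensional 𝕜 (E i)) (F : Submodule 𝕜 Y)
      (_ : FiniteDimensional 𝕜 F) (u₀ : (⨂[𝕜] i, (E i : Type u)) ⊗[𝕜] F),
      TensorProduct.map (PiTensorProduct.map fun i => (E i).subtype) F.subtype u₀ = u ∧
        r = α.tn (β.restrict E) u₀}

/-- A Σ-tensor norm on duals is cofinitely generated (Definition 4.5):
`ν^β(v) = sup ν^{β|}(R_{E₁,…,Eₙ} ⊗ Q_L (v))` over finite dimensional subspaces
`Eᵢ ⊂ Xᵢ` and finite codimensional closed subspaces `L ⊂ Y`. -/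
def SigmaTensorNormOnDuals.IsCofinitelyGenerated (ν : SigmaTensorNormOnDuals 𝕜) : Prop :=
  ∀ {ι : Type} [Fintype ι] [Nonempty ι] {X : ι → Type u}
    [∀ i, NormedAddCommGroup (X i)] [∀ i, NormedSpace 𝕜 (X i)]
    {Y : Type u} [NormedAddCommGroup Y] [NormedSpace 𝕜 Y]
    (β : ReasonableCrossnorm 𝕜 X) (v : (BetaDual β) ⊗[𝕜] Y),
    ν.tn β v = sSup {r | ∃ (E : ∀ i, Submodule 𝕜 (X i))
      (_ : ∀ i, FiniteDimensional 𝕜 (E i)) (L : Submodule 𝕜 Y)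
      (hL : IsClosed (L : Set Y)) (_ : FiniteDimensional 𝕜 (Y ⧸ L)),
      r = ν.tn (β.restrict E)
        (TensorProduct.map (restrictDual β E) L.mkQ v)}

end Predicates
section AuerbachTwo

variable {𝕜 : Type u} [RCLike 𝕜] {E : Type u} [NormedAddCommGroup E] [NormedSpace 𝕜 E]

theorem rep_single (x : E) (hx : x ≠ 0) :
    ∃ (e : E) (g : E →L[𝕜] 𝕜), ‖e‖ ≤ 1 ∧ ‖g‖ ≤ 1 ∧ g x • e = x := by
  obtain ⟨g, hg1, hgx⟩ := exists_dual_vector 𝕜 x (norm_ne_zero_iff.mpr hx)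
  refine ⟨((‖x‖ : 𝕜))⁻¹ • x, g, ?_, le_of_eq hg1, ?_⟩
  · rw [norm_smul, norm_inv, RCLike.norm_ofReal, abs_of_nonneg (norm_nonneg x),
      inv_mul_cancel₀ (norm_ne_zero_iff.mpr hx)]
  · rw [hgx, smul_smul, mul_inv_cancel₀ (RCLike.ofReal_ne_zero.mpr (norm_ne_zero_iff.mpr hx)),
      one_smul]

theorem auerbach_of_smul (x : E) (c : 𝕜) :
    ∃ (e : Fin 2 → E) (f : Fin 2 → (E →L[𝕜] 𝕜)),
      (∀ k, ‖e k‖ ≤ 1) ∧ (∀ k, ‖f k‖ ≤ 1) ∧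
      (∑ k, f k x • e k = x) ∧ (∑ k, f k (c • x) • e k = c • x) := by
  rcases eq_or_ne x 0 with rfl | hx
  · exact ⟨0, 0, by simp, by simp, by simp, by simp⟩
  · obtain ⟨e0, g0, he0, hg0, hrep⟩ := rep_single (𝕜 := 𝕜) x hx
    refine ⟨![e0, 0], ![g0, 0], ?_, ?_, ?_, ?_⟩
    · intro k; fin_cases k <;> simp [he0]
    · intro k; fin_cases k <;> simp [hg0]
    · rw [Fin.sum_univ_two]; simp [hrep]
    · rw [Fin.sum_univ_two]
      simp [mul_smul, hrep]

set_option maxHeartbeats 1000000 in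
theorem auerbach_two (x y : E) :
    ∃ (e : Fin 2 → E) (f : Fin 2 → (E →L[𝕜] 𝕜)),
      (∀ k, ‖e k‖ ≤ 1) ∧ (∀ k, ‖f k‖ ≤ 1) ∧
      (∑ k, f k x • e k = x) ∧ (∑ k, f k y • e k = y) := by
  by_cases hI : LinearIndependent 𝕜 ![x, y]
  · -- independent case
    have hxy0 : x ≠ 0 := by
      intro h
      exact hI.ne_zero 0 (by simpa using h)
    set M := Submodule.span 𝕜 (Set.range ![x, y]) with hMdef
    haveI : FiniteDimensional 𝕜 M := FiniteDimensional.span_of_finite 𝕜 (Set.finite_range _)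
    haveI : ProperSpace M := FiniteDimensional.proper 𝕜 M
    have hxM : x ∈ M := Submodule.subset_span ⟨0, rfl⟩
    have hyM : y ∈ M := Submodule.subset_span ⟨1, rfl⟩
    set xm : M := ⟨x, hxM⟩ with hxmdef
    set ym : M := ⟨y, hyM⟩ with hymdef
    have hIm : LinearIndependent 𝕜 ![xm, ym] := by
      rw [LinearIndependent.pair_iff]
      intro s t hst
      refine LinearIndependent.pair_iff.mp hI s t ?_
      have h2 := congrArg (Submodule.subtype M) hst
      simpa using h2
    have hrank : Module.finrank 𝕜 M = 2 := by
      have h := finrank_span_eq_card hI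
      simpa using h
    let b : Module.Basis (Fin 2) 𝕜 M := basisOfLinearIndependentOfCardEqFinrank hIm (by simp [hrank])
    have hb0 : b 0 = xm := by
      rw [show b 0 = ![xm, ym] 0 from congrFun (coe_basisOfLinearIndependentOfCardEqFinrank _ _) 0]
      simp
    have hb1 : b 1 = ym := by
      rw [show b 1 = ![xm, ym] 1 from congrFun (coe_basisOfLinearIndependentOfCardEqFinrank _ _) 1]
      simp
    set D : M → M → 𝕜 := fun z w => b.coord 0 z * b.coord 1 w - b.coord 1 z * b.coord 0 w
      with hDdef
    have hDxy : D xm ym = 1 := by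
      simp [hDdef, ← hb0, ← hb1, Module.Basis.coord_apply, Module.Basis.repr_self]
    have hDsmul : ∀ (a c : 𝕜) (z w : M), D (a • z) (c • w) = a * c * D z w := by
      intro a c z w
      simp only [hDdef, map_smul, smul_eq_mul]
      ring
    have hDcont : Continuous (fun p : M × M => ‖D p.1 p.2‖) := by
      have h0 : Continuous (b.coord 0) := (b.coord 0).continuous_of_finiteDimensional
      have h1 : Continuous (b.coord 1) := (b.coord 1).continuous_of_finiteDimensional
      exact (((h0.comp continuous_fst).mul (h1.comp continuous_snd)).sub
        ((h1.comp continuous_fst).mul (h0.comp continuous_snd))).norm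
    have hxm0 : xm ≠ 0 := by simpa using hIm.ne_zero 0
    have hym0 : ym ≠ 0 := by simpa using hIm.ne_zero 1
    obtain ⟨⟨u, v⟩, hUV, hmax⟩ :=
      ((isCompact_sphere (0 : M) 1).prod (isCompact_sphere (0 : M) 1)).exists_isMaxOn
        ⟨((‖xm‖ : 𝕜)⁻¹ • xm, (‖ym‖ : 𝕜)⁻¹ • ym),
          Set.mk_mem_prod (mem_sphere_zero_iff_norm.mpr (norm_smul_inv_norm (𝕜 := 𝕜) hxm0))
            (mem_sphere_zero_iff_norm.mpr (norm_smul_inv_norm (𝕜 := 𝕜) hym0))⟩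
        hDcont.continuousOn
    have hu : ‖u‖ = 1 := by
      have := hUV.1
      simpa [mem_sphere_zero_iff_norm] using this
    have hv : ‖v‖ = 1 := by
      have := hUV.2
      simpa [mem_sphere_zero_iff_norm] using this
    have hmax' : ∀ z w : M, ‖z‖ = 1 → ‖w‖ = 1 → ‖D z w‖ ≤ ‖D u v‖ := by
      intro z w hz hw
      exact hmax (Set.mk_mem_prod (mem_sphere_zero_iff_norm.mpr hz)
        (mem_sphere_zero_iff_norm.mpr hw))
    have hnormsmul : ∀ (r : ℝ) (c : 𝕜), ‖((r : 𝕜))⁻¹ * c‖ = |r|⁻¹ * ‖c‖ := by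
      intro r c
      rw [norm_mul, norm_inv, RCLike.norm_ofReal]
    have hDuv_pos : 0 < ‖D u v‖ := by
      refine lt_of_lt_of_le ?_ (hmax' _ _ (norm_smul_inv_norm (𝕜 := 𝕜) hxm0) (norm_smul_inv_norm (𝕜 := 𝕜) hym0))
      rw [hDsmul, hDxy, mul_one, norm_mul, norm_inv, norm_inv, RCLike.norm_ofReal,
        RCLike.norm_ofReal, abs_of_nonneg (norm_nonneg xm), abs_of_nonneg (norm_nonneg ym)]
      have h1 : (0:ℝ) < ‖xm‖ := norm_pos_iff.mpr hxm0
      have h2 : (0:ℝ) < ‖ym‖ := norm_pos_iff.mpr hym0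
      positivity
    have hD0 : D u v ≠ 0 := by
      intro h
      rw [h, norm_zero] at hDuv_pos
      exact lt_irrefl _ hDuv_pos
    have hDle : ∀ z w : M, ‖D z w‖ ≤ ‖D u v‖ * ‖z‖ * ‖w‖ := by
      intro z w
      rcases eq_or_ne z 0 with rfl | hz
      · simp [hDdef]
      rcases eq_or_ne w 0 with rfl | hw
      · simp [hDdef]
      have h := hmax' _ _ (norm_smul_inv_norm (𝕜 := 𝕜) hz) (norm_smul_inv_norm (𝕜 := 𝕜) hw)
      rw [hDsmul, norm_mul, norm_mul, norm_inv, norm_inv, RCLike.norm_ofReal,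
        RCLike.norm_ofReal, abs_of_nonneg (norm_nonneg z), abs_of_nonneg (norm_nonneg w)] at h
      have hz' : (0:ℝ) < ‖z‖ := norm_pos_iff.mpr hz
      have hw' : (0:ℝ) < ‖w‖ := norm_pos_iff.mpr hw
      calc ‖D z w‖ = (‖z‖ * ‖w‖) * (‖z‖⁻¹ * ‖w‖⁻¹ * ‖D z w‖) := by
            rw [show (‖z‖ * ‖w‖) * (‖z‖⁻¹ * ‖w‖⁻¹ * ‖D z w‖) =
              (‖z‖ * ‖z‖⁻¹) * ((‖w‖ * ‖w‖⁻¹) * ‖D z w‖) from by ring,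
              mul_inv_cancel₀ (ne_of_gt hz'), mul_inv_cancel₀ (ne_of_gt hw'), one_mul, one_mul]
          _ ≤ (‖z‖ * ‖w‖) * ‖D u v‖ := mul_le_mul_of_nonneg_left h (by positivity)
          _ = ‖D u v‖ * ‖z‖ * ‖w‖ := by ring
    have hDvv : D v v = 0 := sub_eq_zero_of_eq (mul_comm _ _)
    have hDuu : D u u = 0 := sub_eq_zero_of_eq (mul_comm _ _)
    set F0 : M →ₗ[𝕜] 𝕜 :=
      (D u v)⁻¹ • ((b.coord 1 v) • (b.coord 0) - (b.coord 0 v) • (b.coord 1)) with hF0def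
    set F1 : M →ₗ[𝕜] 𝕜 :=
      (D u v)⁻¹ • ((b.coord 0 u) • (b.coord 1) - (b.coord 1 u) • (b.coord 0)) with hF1def
    have hF0 : ∀ z, F0 z = (D u v)⁻¹ * D z v := by
      intro z
      simp only [hF0def, hDdef, LinearMap.smul_apply, LinearMap.sub_apply, smul_eq_mul]
      try ring
    have hF1 : ∀ z, F1 z = (D u v)⁻¹ * D u z := by
      intro z
      simp only [hF1def, hDdef, LinearMap.smul_apply, LinearMap.sub_apply, smul_eq_mul]
      try ring
    have hF0u : F0 u = 1 := by rw [hF0, inv_mul_cancel₀ hD0]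
    have hF0v : F0 v = 0 := by rw [hF0, hDvv, mul_zero]
    have hF1u : F1 u = 0 := by rw [hF1, hDuu, mul_zero]
    have hF1v : F1 v = 1 := by rw [hF1, inv_mul_cancel₀ hD0]
    have hv0 : v ≠ 0 := by
      intro h
      rw [h, norm_zero] at hv
      exact one_ne_zero hv.symm
    have hIuv : LinearIndependent 𝕜 ![u, v] := by
      rw [LinearIndependent.pair_iff]
      intro s t hst
      have h1 : F0 (s • u + t • v) = 0 := by rw [hst]; simp
      rw [map_add, map_smul, map_smul, hF0u, hF0v, smul_eq_mul, smul_eq_mul,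
        mul_one, mul_zero, add_zero] at h1
      subst h1
      rw [zero_smul, zero_add] at hst
      exact ⟨rfl, (smul_eq_zero.mp hst).resolve_right hv0⟩
    let b2 : Module.Basis (Fin 2) 𝕜 M := basisOfLinearIndependentOfCardEqFinrank hIuv (by simp [hrank])
    have hb2_0 : b2 0 = u := by
      rw [show b2 0 = ![u, v] 0 from congrFun (coe_basisOfLinearIndependentOfCardEqFinrank _ _) 0]
      simp
    have hb2_1 : b2 1 = v := by
      rw [show b2 1 = ![u, v] 1 from congrFun (coe_basisOfLinearIndependentOfCardEqFinrank _ _) 1]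
      simp
    have hrepM : ∀ z : M, z = F0 z • u + F1 z • v := by
      intro z
      obtain ⟨c, d, hz⟩ : ∃ c d : 𝕜, z = c • u + d • v := by
        refine ⟨b2.repr z 0, b2.repr z 1, ?_⟩
        have h := b2.sum_repr z
        rw [Fin.sum_univ_two, hb2_0, hb2_1] at h
        exact h.symm
      rw [hz]
      simp only [map_add, map_smul, hF0u, hF0v, hF1u, hF1v, smul_eq_mul, mul_one, mul_zero,
        add_zero, zero_add]
    have hF0n : ∀ z, ‖F0 z‖ ≤ ‖z‖ := by
      intro z
      rw [hF0, norm_mul, norm_inv]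
      have h := hDle z v
      rw [hv, mul_one] at h
      calc ‖D u v‖⁻¹ * ‖D z v‖ ≤ ‖D u v‖⁻¹ * (‖D u v‖ * ‖z‖) :=
            mul_le_mul_of_nonneg_left h (by positivity)
        _ = ‖z‖ := by field_simp
    have hF1n : ∀ z, ‖F1 z‖ ≤ ‖z‖ := by
      intro z
      rw [hF1, norm_mul, norm_inv]
      have h := hDle u z
      rw [hu, mul_one] at h
      calc ‖D u v‖⁻¹ * ‖D u z‖ ≤ ‖D u v‖⁻¹ * (‖D u v‖ * ‖z‖) := by
            refine mul_le_mul_of_nonneg_left ?_ (by positivity)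
            calc ‖D u z‖ ≤ ‖D u v‖ * ‖u‖ * ‖z‖ := hDle u z
              _ = ‖D u v‖ * ‖z‖ := by rw [hu, mul_one]
        _ = ‖z‖ := by field_simp
    obtain ⟨g0, hg0e, hg0n⟩ := exists_extension_norm_eq M (LinearMap.toContinuousLinearMap F0)
    obtain ⟨g1, hg1e, hg1n⟩ := exists_extension_norm_eq M (LinearMap.toContinuousLinearMap F1)
    have hg0le : ‖g0‖ ≤ 1 := by
      rw [hg0n]
      refine ContinuousLinearMap.opNorm_le_bound _ zero_le_one fun z => ?_
      rw [one_mul]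
      simpa using hF0n z
    have hg1le : ‖g1‖ ≤ 1 := by
      rw [hg1n]
      refine ContinuousLinearMap.opNorm_le_bound _ zero_le_one fun z => ?_
      rw [one_mul]
      simpa using hF1n z
    have hcoe : ∀ z : M, (↑(F0 z • u + F1 z • v) : E) = F0 z • (u : E) + F1 z • (v : E) := by
      intro z; push_cast; rfl
    refine ⟨![(u : E), (v : E)], ![g0, g1], ?_, ?_, ?_, ?_⟩
    · intro k
      fin_cases k <;> simp [Submodule.norm_coe, hu, hv]
    · intro k
      fin_cases k <;> simpa using (by first | exact hg0le | exact hg1le)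
    · rw [Fin.sum_univ_two]
      simp only [Matrix.cons_val_zero, Matrix.cons_val_one, Matrix.head_cons]
      have e0 : g0 x = F0 xm := by
        have h := hg0e xm
        simpa using h
      have e1 : g1 x = F1 xm := by
        have h := hg1e xm
        simpa using h
      rw [e0, e1, ← hcoe xm, ← hrepM xm]
    · rw [Fin.sum_univ_two]
      simp only [Matrix.cons_val_zero, Matrix.cons_val_one, Matrix.head_cons]
      have e0 : g0 y = F0 ym := by
        have h := hg0e ym
        simpa using h
      have e1 : g1 y = F1 ym := by
        have h := hg1e ym
        simpa using h
      rw [e0, e1, ← hcoe ym, ← hrepM ym]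
  · -- dependent case
    rw [LinearIndependent.pair_iff] at hI
    push_neg at hI
    obtain ⟨s, t, hst, hne⟩ := hI
    rcases eq_or_ne t 0 with rfl | ht
    · have hs : s ≠ 0 := fun h => hne h rfl
      have hx0 : x = 0 := by
        rw [zero_smul, add_zero] at hst
        exact (smul_eq_zero.mp hst).resolve_left hs
      obtain ⟨e, f, h1, h2, h3, h4⟩ := auerbach_of_smul (𝕜 := 𝕜) y (0 : 𝕜)
      refine ⟨e, f, h1, h2, ?_, h3⟩
      rw [hx0]
      simpa using h4
    · have hy : y = (-(t⁻¹ * s)) • x := by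
        have h1 : t • y = -(s • x) := eq_neg_of_add_eq_zero_right hst
        have h2 : y = t⁻¹ • (t • y) := (inv_smul_smul₀ ht y).symm
        rw [h2, h1, smul_neg, smul_smul, ← neg_smul]
      obtain ⟨e, f, h1, h2, h3, h4⟩ := auerbach_of_smul (𝕜 := 𝕜) x (-(t⁻¹ * s))
      exact ⟨e, f, h1, h2, h3, by rw [hy]; exact h4⟩

end AuerbachTwo

section SegreLip

variable {𝕜 : Type u} [RCLike 𝕜] {ι : Type} [Fintype ι] [Nonempty ι] {X : ι → Type u}
    [∀ i, NormedAddCommGroup (X i)] [∀ i, NormedSpace 𝕜 (X i)]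
    {Y : Type u} [NormedAddCommGroup Y] [NormedSpace 𝕜 Y]

set_option maxHeartbeats 1000000 in
theorem norm_lift_sub_tprod_le (T : ContinuousMultilinearMap 𝕜 X Y) (x y : (i : ι) → X i) :
    ‖PiTensorProduct.lift T.toMultilinearMap ((⨂ₜ[𝕜] i, x i) - ⨂ₜ[𝕜] i, y i)‖ ≤
      2 ^ (Fintype.card ι - 1) * ‖T‖ *
        epsSeminorm 𝕜 X ((⨂ₜ[𝕜] i, x i) - ⨂ₜ[𝕜] i, y i) := by
  classical
  obtain ⟨i₀⟩ := ‹Nonempty ι›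
  obtain ⟨e, f, h⟩ : ∃ (e : (i : ι) → Fin 2 → X i) (f : (i : ι) → Fin 2 → (X i →L[𝕜] 𝕜)),
      ∀ i, (∀ k, ‖e i k‖ ≤ 1) ∧ (∀ k, ‖f i k‖ ≤ 1) ∧
        (∑ k, f i k (x i) • e i k = x i) ∧ (∑ k, f i k (y i) • e i k = y i) := by
    choose e f h1 h2 h3 h4 using fun i => auerbach_two (𝕜 := 𝕜) (x i) (y i)
    exact ⟨e, f, fun i => ⟨h1 i, h2 i, h3 i, h4 i⟩⟩
  have he : ∀ i k, ‖e i k‖ ≤ 1 := fun i => (h i).1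
  have hf : ∀ i k, ‖f i k‖ ≤ 1 := fun i => (h i).2.1
  have hx : ∀ i, ∑ k, f i k (x i) • e i k = x i := fun i => (h i).2.2.1
  have hy : ∀ i, ∑ k, f i k (y i) • e i k = y i := fun i => (h i).2.2.2
  set J := ({i : ι // i ≠ i₀} → Fin 2) with hJdef
  set jext : J → ι → Fin 2 := fun j i => if h : i = i₀ then 0 else j ⟨i, h⟩ with hjext
  set base : J → (i : ι) → X i := fun j i => e i (jext j i) with hbase
  set C : ((i : ι) → X i) → J → 𝕜 :=
    fun w j => ∏ i ∈ Finset.univ.erase i₀, f i (jext j i) (w i) with hC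
  set v : J → X i₀ := fun j => C x j • x i₀ - C y j • y i₀ with hv
  have expand : ∀ w : (i : ι) → X i, (∀ i, ∑ k, f i k (w i) • e i k = w i) →
      (⨂ₜ[𝕜] i, w i) = ∑ j : J, C w j • ⨂ₜ[𝕜] i, Function.update (base j) i₀ (w i₀) i := by
    intro w hw
    set A : (i : ι) → Fin 2 → X i := fun i k =>
      if i = i₀ then (if k = 0 then w i else 0) else f i k (w i) • e i k with hA
    have hAi : ∀ i, w i = ∑ k, A i k := by
      intro i
      by_cases hi : i = i₀
      · simp [hA, hi, Fin.sum_univ_two]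
      · rw [← hw i]
        exact Finset.sum_congr rfl fun k _ => by simp [hA, hi]
    have h1 : (⨂ₜ[𝕜] i, w i) = ∑ r : ι → Fin 2, ⨂ₜ[𝕜] i, A i (r i) := by
      conv_lhs => rw [show w = fun i => ∑ k, A i k from funext hAi]
      exact MultilinearMap.map_sum (PiTensorProduct.tprod 𝕜) A
    rw [h1, ← (Equiv.piSplitAt i₀ (fun _ : ι => Fin 2)).symm.sum_comp
        (fun r => ⨂ₜ[𝕜] i, A i (r i)), Fintype.sum_prod_type, Fin.sum_univ_two]
    have hsplit : ∀ (k : Fin 2) (j : J) (i : ι),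
        (Equiv.piSplitAt i₀ (fun _ : ι => Fin 2)).symm (k, j) i =
          if h : i = i₀ then k else j ⟨i, h⟩ := by
      intro k j i
      by_cases hi : i = i₀
      · subst hi
        simp [Equiv.piSplitAt_symm_apply]
      · simp [Equiv.piSplitAt_symm_apply, hi]
    have hzero : ∑ j : J, (⨂ₜ[𝕜] i, A i ((Equiv.piSplitAt i₀ (fun _ : ι => Fin 2)).symm (1, j) i))
        = 0 := by
      refine Finset.sum_eq_zero fun j _ => ?_
      refine MultilinearMap.map_coord_zero (PiTensorProduct.tprod 𝕜) i₀ ?_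
      rw [hsplit]
      simp [hA]
    rw [hzero, add_zero]
    refine Finset.sum_congr rfl fun j _ => ?_
    set c : ι → 𝕜 := fun i => if h : i = i₀ then 1 else f i (j ⟨i, h⟩) (w i) with hc
    have hfun : (fun i => A i ((Equiv.piSplitAt i₀ (fun _ : ι => Fin 2)).symm (0, j) i)) =
        fun i => c i • Function.update (base j) i₀ (w i₀) i := by
      funext i
      rw [hsplit]
      by_cases hi : i = i₀
      · subst hi
        simp [hA, hc, Function.update_self]
      · simp [hA, hc, hi, Function.update_of_ne hi, hbase, hjext]
    calc (⨂ₜ[𝕜] i, A i ((Equiv.piSplitAt i₀ (fun _ : ι => Fin 2)).symm (0, j) i))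
        = (⨂ₜ[𝕜] i, c i • Function.update (base j) i₀ (w i₀) i) := by rw [hfun]
      _ = (∏ i, c i) • ⨂ₜ[𝕜] i, Function.update (base j) i₀ (w i₀) i :=
          MultilinearMap.map_smul_univ (PiTensorProduct.tprod 𝕜) c _
      _ = C w j • ⨂ₜ[𝕜] i, Function.update (base j) i₀ (w i₀) i := by
          congr 1
          rw [← Finset.mul_prod_erase Finset.univ c (Finset.mem_univ i₀)]
          rw [show c i₀ = 1 from by simp [hc], one_mul]
          refine Finset.prod_congr rfl fun i hi => ?_
          have hi' := (Finset.mem_erase.mp hi).1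
          simp [hc, hC, hjext, hi']
  have hdiff : (⨂ₜ[𝕜] i, x i) - (⨂ₜ[𝕜] i, y i) =
      ∑ j : J, ⨂ₜ[𝕜] i, Function.update (base j) i₀ (v j) i := by
    rw [expand x hx, expand y hy, ← Finset.sum_sub_distrib]
    refine Finset.sum_congr rfl fun j _ => ?_
    rw [show v j = C x j • x i₀ - C y j • y i₀ from rfl]
    rw [MultilinearMap.map_update_sub (PiTensorProduct.tprod 𝕜) (base j) i₀ _ _,
      MultilinearMap.map_update_smul (PiTensorProduct.tprod 𝕜) (base j) i₀ _ _,
      MultilinearMap.map_update_smul (PiTensorProduct.tprod 𝕜) (base j) i₀ _ _]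
  have hvle : ∀ j : J, ‖v j‖ ≤ epsSeminorm 𝕜 X ((⨂ₜ[𝕜] i, x i) - ⨂ₜ[𝕜] i, y i) := by
    intro j
    rcases eq_or_ne (v j) 0 with hv0 | hv0
    · rw [hv0, norm_zero]
      exact epsSeminorm_nonneg _
    obtain ⟨φ, hφ1, hφv⟩ := exists_dual_vector 𝕜 (v j) (norm_ne_zero_iff.mpr hv0)
    set g : (i : ι) → X i →L[𝕜] 𝕜 := Function.update (fun i => f i (jext j i)) i₀ φ with hg
    have hgle : ∀ i, ‖g i‖ ≤ 1 := by
      intro i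
      by_cases hi : i = i₀
      · subst hi
        rw [hg, Function.update_self, hφ1]
      · rw [hg, Function.update_of_ne hi]
        exact hf i _
    have hprod : ∀ w : (i : ι) → X i, (∀ i, ∑ k, f i k (w i) • e i k = w i) → True := fun _ _ => trivial
    have hval : PiTensorProduct.lift
        ((ContinuousMultilinearMap.mkPiAlgebra 𝕜 ι 𝕜).compContinuousLinearMap g).toMultilinearMap
        ((⨂ₜ[𝕜] i, x i) - ⨂ₜ[𝕜] i, y i) = φ (v j) := by
      rw [map_sub, PiTensorProduct.lift.tprod, PiTensorProduct.lift.tprod]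
      simp only [ContinuousMultilinearMap.coe_coe,
        ContinuousMultilinearMap.compContinuousLinearMap_apply,
        ContinuousMultilinearMap.mkPiAlgebra_apply]
      rw [show v j = C x j • x i₀ - C y j • y i₀ from rfl, map_sub, map_smul, map_smul]
      rw [← Finset.mul_prod_erase Finset.univ (fun i => g i (x i)) (Finset.mem_univ i₀),
        ← Finset.mul_prod_erase Finset.univ (fun i => g i (y i)) (Finset.mem_univ i₀)]
      have hgi₀ : g i₀ = φ := by rw [hg, Function.update_self]
      have hgx : ∏ i ∈ Finset.univ.erase i₀, g i (x i) = C x j := by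
        refine Finset.prod_congr rfl fun i hi => ?_
        have hi' := (Finset.mem_erase.mp hi).1
        rw [hg, Function.update_of_ne hi']
      have hgy : ∏ i ∈ Finset.univ.erase i₀, g i (y i) = C y j := by
        refine Finset.prod_congr rfl fun i hi => ?_
        have hi' := (Finset.mem_erase.mp hi).1
        rw [hg, Function.update_of_ne hi']
      rw [hgx, hgy, hgi₀]
      simp only [smul_eq_mul]
      ring
    have hmem : ‖PiTensorProduct.lift
        ((ContinuousMultilinearMap.mkPiAlgebra 𝕜 ι 𝕜).compContinuousLinearMap g).toMultilinearMap
        ((⨂ₜ[𝕜] i, x i) - ⨂ₜ[𝕜] i, y i)‖ ∈ epsSet ((⨂ₜ[𝕜] i, x i) - ⨂ₜ[𝕜] i, y i) :=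
      ⟨g, hgle, rfl⟩
    refine le_trans ?_ (le_csSup (epsSet_bdd _) hmem)
    rw [hval, hφv, RCLike.norm_ofReal, abs_of_nonneg (norm_nonneg _)]
  have hterm : ∀ j : J, ‖PiTensorProduct.lift T.toMultilinearMap
      (⨂ₜ[𝕜] i, Function.update (base j) i₀ (v j) i)‖ ≤ ‖T‖ * ‖v j‖ := by
    intro j
    rw [PiTensorProduct.lift.tprod]
    refine le_trans (T.le_opNorm _) ?_
    refine mul_le_mul_of_nonneg_left ?_ (norm_nonneg T)
    rw [← Finset.mul_prod_erase Finset.univ _ (Finset.mem_univ i₀), Function.update_self]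
    calc ‖v j‖ * ∏ i ∈ Finset.univ.erase i₀, ‖Function.update (base j) i₀ (v j) i‖
        ≤ ‖v j‖ * 1 := by
          refine mul_le_mul_of_nonneg_left ?_ (norm_nonneg _)
          refine Finset.prod_le_one (fun i _ => norm_nonneg _) fun i hi => ?_
          rw [Function.update_of_ne (Finset.mem_erase.mp hi).1]
          exact he i _
      _ = ‖v j‖ := mul_one _
  have hcard : Fintype.card J = 2 ^ (Fintype.card ι - 1) := by
    have h2 : Fintype.card {i : ι // i ≠ i₀} = Fintype.card ι - 1 := by
      have h1 := Fintype.card_subtype_compl (fun i : ι => i = i₀)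
      rw [Fintype.card_subtype_eq] at h1
      exact h1
    have h3 : Fintype.card ({i : ι // i ≠ i₀} → Fin 2) = 2 ^ (Fintype.card ι - 1) := by
      rw [Fintype.card_fun, Fintype.card_fin, h2]
    exact h3
  calc ‖PiTensorProduct.lift T.toMultilinearMap ((⨂ₜ[𝕜] i, x i) - ⨂ₜ[𝕜] i, y i)‖
      = ‖∑ j : J, PiTensorProduct.lift T.toMultilinearMap
          (⨂ₜ[𝕜] i, Function.update (base j) i₀ (v j) i)‖ := by
        rw [show PiTensorProduct.lift T.toMultilinearMap ((⨂ₜ[𝕜] i, x i) - ⨂ₜ[𝕜] i, y i) =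
          ∑ j : J, PiTensorProduct.lift T.toMultilinearMap
            (⨂ₜ[𝕜] i, Function.update (base j) i₀ (v j) i) from by rw [hdiff, map_sum]]
    _ ≤ ∑ j : J, ‖PiTensorProduct.lift T.toMultilinearMap
          (⨂ₜ[𝕜] i, Function.update (base j) i₀ (v j) i)‖ := norm_sum_le _ _
    _ ≤ ∑ _j : J, ‖T‖ * epsSeminorm 𝕜 X ((⨂ₜ[𝕜] i, x i) - ⨂ₜ[𝕜] i, y i) := by
        refine Finset.sum_le_sum fun j _ => ?_
        refine le_trans (hterm j) ?_
        exact mul_le_mul_of_nonneg_left (hvle j) (norm_nonneg T)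
    _ = (Fintype.card J : ℝ) * (‖T‖ * epsSeminorm 𝕜 X ((⨂ₜ[𝕜] i, x i) - ⨂ₜ[𝕜] i, y i)) := by
        rw [Finset.sum_const, Finset.card_univ, nsmul_eq_mul]
    _ = 2 ^ (Fintype.card ι - 1) * ‖T‖ *
          epsSeminorm 𝕜 X ((⨂ₜ[𝕜] i, x i) - ⨂ₜ[𝕜] i, y i) := by
        rw [hcard]
        push_cast
        ring

end SegreLip

/-- for a bounded multilinear operator `T`,
`‖T‖ = Lip^π(f_T) ≤ Lip^β(f_T) ≤ 2^(n−1) Lip^π(f_T)`. -/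
theorem norm_eq_lip_and_lip_equiv
    {𝕜 : Type u} [RCLike 𝕜] {ι : Type} [Fintype ι] [Nonempty ι]
    {X : ι → Type u} [∀ i, NormedAddCommGroup (X i)] [∀ i, NormedSpace 𝕜 (X i)]
    [∀ i, CompleteSpace (X i)]
    {Y : Type u} [NormedAddCommGroup Y] [NormedSpace 𝕜 Y] [CompleteSpace Y]
    (T : ContinuousMultilinearMap 𝕜 X Y) (β : ReasonableCrossnorm 𝕜 X) :
    ‖T‖ = lipschitzNormOn ReasonableCrossnorm.proj
        (PiTensorProduct.lift T.toMultilinearMap) ∧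
    lipschitzNormOn ReasonableCrossnorm.proj (PiTensorProduct.lift T.toMultilinearMap) ≤
      lipschitzNormOn β (PiTensorProduct.lift T.toMultilinearMap) ∧
    lipschitzNormOn β (PiTensorProduct.lift T.toMultilinearMap) ≤
      (2 : ℝ) ^ (Fintype.card ι - 1) *
        lipschitzNormOn ReasonableCrossnorm.proj (PiTensorProduct.lift T.toMultilinearMap) := by
  classical
  have hzeroSegre : (0 : ⨂[𝕜] i, X i) ∈ Segre 𝕜 X :=
    ⟨fun _ => 0,
      (MultilinearMap.map_coord_zero (PiTensorProduct.tprod 𝕜) (Classical.arbitrary ι) rfl).symm⟩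
  have hmemπ : ‖T‖ ∈ {C | 0 ≤ C ∧ ∀ p ∈ Segre 𝕜 X, ∀ q ∈ Segre 𝕜 X,
      ‖PiTensorProduct.lift T.toMultilinearMap p - PiTensorProduct.lift T.toMultilinearMap q‖ ≤
        C * (ReasonableCrossnorm.proj (𝕜 := 𝕜) (X := X)).toFun (p - q)} := by
    refine ⟨norm_nonneg _, fun p _ q _ => ?_⟩
    rw [← map_sub]
    calc ‖PiTensorProduct.lift T.toMultilinearMap (p - q)‖
        ≤ projectiveSeminorm (p - q) * ‖T‖ := (norm_eval_le_projectiveSeminorm T _).trans (le_of_eq (mul_comm _ _))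
      _ = ‖T‖ * (ReasonableCrossnorm.proj (𝕜 := 𝕜) (X := X)).toFun (p - q) := mul_comm _ _
  have hlb : ∀ C, (0 ≤ C ∧ ∀ p ∈ Segre 𝕜 X, ∀ q ∈ Segre 𝕜 X,
      ‖PiTensorProduct.lift T.toMultilinearMap p - PiTensorProduct.lift T.toMultilinearMap q‖ ≤
        C * (ReasonableCrossnorm.proj (𝕜 := 𝕜) (X := X)).toFun (p - q)) → ‖T‖ ≤ C := by
    rintro C ⟨hC0, hC⟩
    refine (ContinuousMultilinearMap.opNorm_le_iff hC0).mpr fun m => ?_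
    have h1 := hC (⨂ₜ[𝕜] i, m i) ⟨m, rfl⟩ 0 hzeroSegre
    rw [map_zero, sub_zero, sub_zero] at h1
    have h2 : PiTensorProduct.lift T.toMultilinearMap (⨂ₜ[𝕜] i, m i) = T m :=
      PiTensorProduct.lift.tprod m
    rw [h2] at h1
    refine h1.trans ?_
    exact mul_le_mul_of_nonneg_left (projectiveSeminorm_tprod_le m) hC0
  have hmemβ : (2 : ℝ) ^ (Fintype.card ι - 1) * ‖T‖ ∈ {C | 0 ≤ C ∧ ∀ p ∈ Segre 𝕜 X,
      ∀ q ∈ Segre 𝕜 X,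
      ‖PiTensorProduct.lift T.toMultilinearMap p - PiTensorProduct.lift T.toMultilinearMap q‖ ≤
        C * β.toFun (p - q)} := by
    refine ⟨by positivity, ?_⟩
    rintro p ⟨xx, rfl⟩ q ⟨yy, rfl⟩
    rw [← map_sub]
    refine (norm_lift_sub_tprod_le T xx yy).trans ?_
    exact mul_le_mul_of_nonneg_left (β.inj_le' _) (by positivity)
  have h1 : lipschitzNormOn ReasonableCrossnorm.proj (PiTensorProduct.lift T.toMultilinearMap)
      = ‖T‖ := by
    refine le_antisymm (csInf_le ⟨0, fun c hc => hc.1⟩ hmemπ) (le_csInf ⟨‖T‖, hmemπ⟩ hlb)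
  refine ⟨h1.symm, ?_, ?_⟩
  · rw [show lipschitzNormOn ReasonableCrossnorm.proj (PiTensorProduct.lift T.toMultilinearMap)
      = ‖T‖ from h1]
    refine le_csInf ⟨_, hmemβ⟩ fun c hc => ?_
    refine hlb c ⟨hc.1, fun p hp q hq => (hc.2 p hp q hq).trans ?_⟩
    exact mul_le_mul_of_nonneg_left (β.le_proj' _) hc.1
  · rw [show lipschitzNormOn ReasonableCrossnorm.proj (PiTensorProduct.lift T.toMultilinearMap)
      = ‖T‖ from h1]
    exact csInf_le ⟨0, fun c hc => hc.1⟩ hmemβ
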